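/- Let n, d ≥ 1 and consider the OV-reduction graph G built from sets A, B each consisting of n copies of the all-ones vector in {0,1}^d. Then G contains the complete bipartite graph K_{n,d} as a subgraph (between the A-vertices and the coordinate vertices), and hence the treewidth of G is at least min(n, d). -/

import Mathlib

open SimpleGraph

abbrev OVVert (n d : ℕ) := (Fin n ⊕ Fin n) ⊕ (Fin d ⊕ Bool)

/-- vertex for `a ∈ A` -/
abbrev OVVert.vA {n d : ℕ} (a : Fin n) : OVVert n d := Sum.inl (Sum.inl a)
/-- vertex for `b ∈ B` -/
abbrev OVVert.vB {n d : ℕ} (b : Fin n) : OVVert n d := Sum.inl (Sum.inr b)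
/-- coordinate vertex `c_i` -/
abbrev OVVert.vC {n d : ℕ} (i : Fin d) : OVVert n d := Sum.inr (Sum.inl i)
/-- special vertex `x` -/
abbrev OVVert.vX {n d : ℕ} : OVVert n d := Sum.inr (Sum.inr false)
/-- special vertex `y` -/
abbrev OVVert.vY {n d : ℕ} : OVVert n d := Sum.inr (Sum.inr true)

def ovRel (n d : ℕ) (A B : Fin n → Fin d → Bool) : OVVert n d → OVVert n d → Prop
  | Sum.inl (Sum.inl a), Sum.inr (Sum.inl i) => A a i = true
  | Sum.inl (Sum.inr b), Sum.inr (Sum.inl i) => B b i = true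
  | Sum.inr (Sum.inr false), Sum.inl (Sum.inl _) => True
  | Sum.inr (Sum.inr true), Sum.inl (Sum.inr _) => True
  | Sum.inr (Sum.inr _), Sum.inr (Sum.inl _) => True
  | Sum.inr (Sum.inr false), Sum.inr (Sum.inr true) => True
  | _, _ => False

/-- The Roditty–Vassilevska-Williams OV-reduction graph. -/
def ovGraph (n d : ℕ) (A B : Fin n → Fin d → Bool) : SimpleGraph (OVVert n d) :=
  SimpleGraph.fromRel (ovRel n d A B)

structure TreeDecomposition {V : Type} (G : SimpleGraph V) where
  ι : Type
  tree : SimpleGraph ι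
  isTree : tree.IsTree
  bag : ι → Set V
  covers_vertex : ∀ v, ∃ t, v ∈ bag t
  covers_edge : ∀ ⦃u v⦄, G.Adj u v → ∃ t, u ∈ bag t ∧ v ∈ bag t
  bag_connected : ∀ v, (tree.induce {t | v ∈ bag t}).Connected

/-- The decomposition has width at most `w` (all bags of size at most `w+1`). -/
def TreeDecomposition.widthLE {V : Type} {G : SimpleGraph V}
    (D : TreeDecomposition G) (w : ℕ) : Prop :=
  ∀ t, (D.bag t).ncard ≤ w + 1

/-- Treewidth: the least `w` such that some tree decomposition has width `w`. -/
noncomputable def treewidth {V : Type} (G : SimpleGraph V) : ℕ :=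
  sInf {w | ∃ D : TreeDecomposition G, D.widthLE w}


set_option linter.unusedSectionVars false


section TreeHelly

variable {ι : Type} [DecidableEq ι] {T : SimpleGraph ι}

/-- A set is convex if the support of any path between two members stays inside. -/
def ConvSet (T : SimpleGraph ι) (S : Set ι) : Prop :=
  ∀ ⦃u v : ι⦄, u ∈ S → v ∈ S → ∀ (p : T.Walk u v), p.IsPath → ∀ x ∈ p.support, x ∈ S

lemma walk_path_unique (hT : T.IsAcyclic) {u v : ι} {p q : T.Walk u v}
    (hp : p.IsPath) (hq : q.IsPath) : p = q :=
  congrArg Subtype.val (hT.path_unique ⟨p, hp⟩ ⟨q, hq⟩)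

noncomputable def somePath (hc : T.Preconnected) (u v : ι) : T.Walk u v :=
  ((hc u v).some).bypass

lemma somePath_isPath (hc : T.Preconnected) (u v : ι) : (somePath hc u v).IsPath := by
  unfold somePath; exact Walk.bypass_isPath _

lemma convSet_of_induce_connected (hT : T.IsAcyclic) {S : Set ι}
    (h : (T.induce S).Connected) : ConvSet T S := by
  intro u v hu hv p hp x hx
  obtain ⟨w⟩ := h.preconnected ⟨u, hu⟩ ⟨v, hv⟩
  let w' : T.Walk u v := w.map (Embedding.induce S).toHom
  have hsup : ∀ y ∈ w'.support, y ∈ S := by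
    intro y hy
    rw [show w'.support = _ from Walk.support_map _ _, List.mem_map] at hy
    obtain ⟨z, _, rfl⟩ := hy
    exact z.2
  have heq : p = w'.bypass := walk_path_unique hT hp (Walk.bypass_isPath _)
  exact hsup x (Walk.support_bypass_subset _ (heq ▸ hx))

lemma convSet_inter {S₁ S₂ : Set ι} (h₁ : ConvSet T S₁) (h₂ : ConvSet T S₂) :
    ConvSet T (S₁ ∩ S₂) := fun _ _ hu hv p hp x hx =>
  ⟨h₁ hu.1 hv.1 p hp x hx, h₂ hu.2 hv.2 p hp x hx⟩

lemma convSet_union (hT : T.IsAcyclic) (hc : T.Preconnected) {S₁ S₂ : Set ι}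
    (h₁ : ConvSet T S₁) (h₂ : ConvSet T S₂) (hne : (S₁ ∩ S₂).Nonempty) :
    ConvSet T (S₁ ∪ S₂) := by
  obtain ⟨t, ht1, ht2⟩ := hne
  have key : ∀ (u v : ι), u ∈ S₁ → v ∈ S₂ →
      ∀ (p : T.Walk u v), p.IsPath → ∀ x ∈ p.support, x ∈ S₁ ∪ S₂ := by
    intro u v hu hv p hp x hx
    have heq : p = ((somePath hc u t).append (somePath hc t v)).bypass :=
      walk_path_unique hT hp (Walk.bypass_isPath _)
    have hx' := Walk.support_bypass_subset _ (heq ▸ hx)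
    rw [Walk.mem_support_append_iff] at hx'
    rcases hx' with hx' | hx'
    · exact Or.inl (h₁ hu ht1 _ (somePath_isPath hc u t) x hx')
    · exact Or.inr (h₂ ht2 hv _ (somePath_isPath hc t v) x hx')
  rintro u v (hu | hu) (hv | hv) p hp x hx
  · exact Or.inl (h₁ hu hv p hp x hx)
  · exact key u v hu hv p hp x hx
  · exact key v u hv hu p.reverse hp.reverse x (by simpa using hx)
  · exact Or.inr (h₂ hu hv p hp x hx)

lemma exists_first_mem {X : Set ι} :
    ∀ {u v : ι} (p : T.Walk u v), v ∈ X →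
    ∃ (m : ι) (p₁ : T.Walk u m) (p₂ : T.Walk m v),
      p = p₁.append p₂ ∧ m ∈ X ∧ ∀ x ∈ p₁.support, x ∈ X → x = m := by
  intro u v p hv
  induction p with
  | nil =>
    exact ⟨_, .nil, .nil, rfl, hv, by intro x hx _; simpa using hx⟩
  | @cons a b c h q ih =>
    by_cases ha : a ∈ X
    · exact ⟨a, .nil, .cons h q, rfl, ha, by intro x hx _; simpa using hx⟩
    · obtain ⟨m, q₁, q₂, heq, hm, hcond⟩ := ih hv
      refine ⟨m, .cons h q₁, q₂, by rw [Walk.cons_append, ← heq], hm, ?_⟩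
      intro x hx hxX
      rw [Walk.support_cons, List.mem_cons] at hx
      rcases hx with rfl | hx
      · exact absurd hxX ha
      · exact hcond x hx hxX

lemma exists_median (hT : T.IsAcyclic) (hc : T.Preconnected) (a b c : ι) :
    ∃ m, (∀ p : T.Walk a b, p.IsPath → m ∈ p.support) ∧
         (∀ q : T.Walk a c, q.IsPath → m ∈ q.support) ∧
         (∀ r : T.Walk b c, r.IsPath → m ∈ r.support) := by
  classical
  set p : T.Walk b a := somePath hc b a with hp_def
  have hp : p.IsPath := somePath_isPath hc b a
  set q : T.Walk a c := somePath hc a c with hq_def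
  have hq : q.IsPath := somePath_isPath hc a c
  obtain ⟨m, p₁, p₂, heq, hm, hfirst⟩ :=
    exists_first_mem (X := {x | x ∈ q.support}) p (Walk.start_mem_support q)
  have hp₁ : p₁.IsPath := Walk.IsPath.of_append_left (heq ▸ hp)
  have hq₂ : (q.dropUntil m hm).IsPath := hq.dropUntil hm
  -- build the path from b to c through m
  set w : T.Walk b c := p₁.append (q.dropUntil m hm) with hw_def
  have hw : w.IsPath := by
    rw [Walk.isPath_def, Walk.support_append, List.nodup_append]
    refine ⟨hp₁.support_nodup, ?_, ?_⟩
    · have := hq₂.support_nodup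
      rw [Walk.support_eq_cons] at this
      exact this.of_cons
    · intro x hx₁ y hx₂ hxy
      subst hxy
      have hxq : x ∈ q.support := Walk.support_dropUntil_subset q hm
        (by rw [Walk.support_eq_cons]; exact List.mem_cons_of_mem _ hx₂)
      have hxm : x = m := hfirst x hx₁ hxq
      have := hq₂.support_nodup
      rw [Walk.support_eq_cons, List.nodup_cons] at this
      exact this.1 (hxm ▸ hx₂)
  have hmp : m ∈ p.support := heq ▸ (Walk.mem_support_append_iff _ _).2
    (Or.inl (Walk.end_mem_support p₁))
  have hmw : m ∈ w.support := (Walk.mem_support_append_iff _ _).2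
    (Or.inl (Walk.end_mem_support p₁))
  refine ⟨m, ?_, ?_, ?_⟩
  · intro pab hpab
    have : pab = p.reverse := walk_path_unique hT hpab hp.reverse
    rw [this, Walk.support_reverse, List.mem_reverse]
    exact hmp
  · intro qac hqac
    rw [walk_path_unique hT hqac hq]
    exact hm
  · intro r hr
    rw [walk_path_unique hT hr hw]
    exact hmw

lemma helly3 (hT : T.IsAcyclic) (hc : T.Preconnected) {S₁ S₂ S₃ : Set ι}
    (h₁ : ConvSet T S₁) (h₂ : ConvSet T S₂) (h₃ : ConvSet T S₃)
    (h₁₂ : (S₁ ∩ S₂).Nonempty) (h₁₃ : (S₁ ∩ S₃).Nonempty)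
    (h₂₃ : (S₂ ∩ S₃).Nonempty) : (S₁ ∩ S₂ ∩ S₃).Nonempty := by
  obtain ⟨c, hc1, hc2⟩ := h₁₂
  obtain ⟨b, hb1, hb3⟩ := h₁₃
  obtain ⟨a, ha2, ha3⟩ := h₂₃
  obtain ⟨m, hmab, hmac, hmbc⟩ := exists_median hT hc a b c
  refine ⟨m, ⟨?_, ?_⟩, ?_⟩
  · exact h₁ hb1 hc1 _ (somePath_isPath hc b c) m
      (hmbc _ (somePath_isPath hc b c))
  · exact h₂ ha2 hc2 _ (somePath_isPath hc a c) m
      (hmac _ (somePath_isPath hc a c))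
  · exact h₃ ha3 hb3 _ (somePath_isPath hc a b) m
      (hmab _ (somePath_isPath hc a b))

lemma helly_finset (hT : T.IsAcyclic) (hc : T.Preconnected) {κ : Type} (S : κ → Set ι)
    (hconv : ∀ i, ConvSet T (S i)) (hpair : ∀ i j, (S i ∩ S j).Nonempty)
    (F : Finset κ) : ∀ j, (S j ∩ ⋂ i ∈ F, S i).Nonempty := by
  classical
  induction F using Finset.induction with
  | empty =>
    intro j
    obtain ⟨x, hx, -⟩ := hpair j j
    exact ⟨x, hx, by simp⟩
  | @insert a F ha ih =>
    intro j
    have hconvF : ConvSet T (⋂ i ∈ F, S i) := by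
      intro u v hu hv p hp x hx
      rw [Set.mem_iInter₂] at hu hv ⊢
      intro i hi
      exact hconv i (hu i hi) (hv i hi) p hp x hx
    have h3 := helly3 hT hc (hconv j) (hconv a) hconvF
      (hpair j a) (ih j) (ih a)
    rw [Set.inter_assoc] at h3
    simpa [Set.biInter_insert] using h3
end TreeHelly

lemma TreeDecomposition.exists_bag_hits {V : Type} {G : SimpleGraph V}
    (D : TreeDecomposition G) {κ : Type} [Fintype κ] (P Q : κ → V) (xx : V)
    (hPQ : ∀ i j, G.Adj (P i) (Q j)) (hx : ∀ i, G.Adj xx (P i)) :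
    ∃ t, xx ∈ D.bag t ∧ ∀ i, P i ∈ D.bag t ∨ Q i ∈ D.bag t := by
  classical
  have hT := D.isTree.IsAcyclic
  have hc := D.isTree.isConnected.preconnected
  set Tv : V → Set D.ι := fun v => {t | v ∈ D.bag t} with hTv
  have hconvTv : ∀ v, ConvSet D.tree (Tv v) := fun v =>
    convSet_of_induce_connected hT (D.bag_connected v)
  set U : Option κ → Set D.ι :=
    fun o => o.elim (Tv xx) (fun i => Tv (P i) ∪ Tv (Q i)) with hU
  have hconv : ∀ o, ConvSet D.tree (U o) := by
    rintro (_ | i)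
    · exact hconvTv xx
    · obtain ⟨t, h1, h2⟩ := D.covers_edge (hPQ i i)
      exact convSet_union hT hc (hconvTv _) (hconvTv _) ⟨t, h1, h2⟩
  have hpair : ∀ o o', (U o ∩ U o').Nonempty := by
    rintro (_ | i) (_ | j)
    · obtain ⟨t, ht⟩ := D.covers_vertex xx; exact ⟨t, ht, ht⟩
    · obtain ⟨t, h1, h2⟩ := D.covers_edge (hx j); exact ⟨t, h1, Or.inl h2⟩
    · obtain ⟨t, h1, h2⟩ := D.covers_edge (hx i); exact ⟨t, Or.inl h2, h1⟩
    · obtain ⟨t, h1, h2⟩ := D.covers_edge (hPQ i j)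
      exact ⟨t, Or.inl h1, Or.inr h2⟩
  obtain ⟨t, htnone, htall⟩ :=
    helly_finset hT hc U hconv hpair Finset.univ none
  rw [Set.mem_iInter₂] at htall
  exact ⟨t, htnone, fun i => htall (some i) (Finset.mem_univ _)⟩

/-- A trivial (one-bag) tree decomposition. -/
noncomputable def trivialDecomp {V : Type} (G : SimpleGraph V) : TreeDecomposition G where
  ι := Unit
  tree := ⊥
  isTree := by
    constructor
    · rw [connected_iff]
      exact ⟨fun u v => by cases u; cases v; exact Reachable.refl _, ⟨()⟩⟩
    · intro v c hcyc
      cases c with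
      | nil => exact hcyc.ne_nil rfl
      | cons h _ => exact h
  bag := fun _ => Set.univ
  covers_vertex := fun v => ⟨(), trivial⟩
  covers_edge := fun u v _ => ⟨(), trivial, trivial⟩
  bag_connected := fun v => by
    rw [connected_iff]
    refine ⟨fun a b => ?_, ⟨⟨(), trivial⟩⟩⟩
    rw [Subsingleton.elim a b]

open OVVert in
theorem ovGraph_allOnes_treewidth_lower (n d : ℕ) (hn : 1 ≤ n) (hd : 1 ≤ d)
    (A B : Fin n → Fin d → Bool) (hA : ∀ a i, A a i = true)
    (hB : ∀ b i, B b i = true) :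
    (∃ f : Fin n ⊕ Fin d → OVVert n d, Function.Injective f ∧
      ∀ u v, (completeBipartiteGraph (Fin n) (Fin d)).Adj u v →
        (ovGraph n d A B).Adj (f u) (f v)) ∧
    min n d ≤ treewidth (ovGraph n d A B) := by
  classical
  have adjAC : ∀ (a : Fin n) (i : Fin d), (ovGraph n d A B).Adj (vA a) (vC i) := by
    intro a i
    rw [ovGraph, fromRel_adj]
    exact ⟨by simp, Or.inl (hA a i)⟩
  have adjXA : ∀ (a : Fin n), (ovGraph n d A B).Adj vX (vA a) := by
    intro a
    rw [ovGraph, fromRel_adj]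
    exact ⟨by simp, Or.inl trivial⟩
  constructor
  · refine ⟨Sum.elim (fun a => vA a) (fun i => vC i), ?_, ?_⟩
    · rintro (a | i) (b | j) h <;> simp_all
    · rintro (a | i) (b | j) h
      · simp at h
      · exact adjAC a j
      · exact (adjAC b i).symm
      · simp at h
  · set m := min n d with hm
    refine le_csInf ⟨(Set.univ : Set (OVVert n d)).ncard, trivialDecomp _,
      fun t => Nat.le_succ _⟩ ?_
    rintro w ⟨D, hD⟩
    set P : Fin m → OVVert n d := fun i => vA (Fin.castLE (min_le_left n d) i) with hP
    set Q : Fin m → OVVert n d := fun i => vC (Fin.castLE (min_le_right n d) i) with hQ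
    obtain ⟨t, hxt, hall⟩ := D.exists_bag_hits P Q vX
      (fun i j => adjAC _ _) (fun i => adjXA _)
    set g : Fin m → OVVert n d := fun i => if P i ∈ D.bag t then P i else Q i with hg
    have hg_mem : ∀ i, g i ∈ D.bag t := by
      intro i
      by_cases h : P i ∈ D.bag t
      · simpa [hg, h] using h
      · simpa [hg, h] using (hall i).resolve_left h
    have hg_inj : Function.Injective g := by
      intro i j hij
      by_cases hi : P i ∈ D.bag t <;> by_cases hj : P j ∈ D.bag t <;>
          simp only [hg, hi, hj, if_true, if_false] at hij
      · exact Fin.castLE_injective (min_le_left n d) (by simpa [hP] using hij)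
      · simp [hP, hQ] at hij
      · simp [hP, hQ] at hij
      · exact Fin.castLE_injective (min_le_right n d) (by simpa [hQ] using hij)
    have hxnot : (vX : OVVert n d) ∉ Set.range g := by
      rintro ⟨i, hi⟩
      by_cases h : P i ∈ D.bag t <;> simp [hg, h] at hi <;> simp [hP, hQ] at hi
    have hsub : insert (vX : OVVert n d) (Set.range g) ⊆ D.bag t := by
      rintro x (rfl | ⟨i, rfl⟩)
      · exact hxt
      · exact hg_mem i
    have hcard : m + 1 = (insert (vX : OVVert n d) (Set.range g)).ncard := by
      rw [Set.ncard_insert_of_notMem hxnot (Set.toFinite _), ← Set.image_univ,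
        Set.ncard_image_of_injective _ hg_inj, Set.ncard_univ]
      simp
    have hle : m + 1 ≤ (D.bag t).ncard := by
      rw [hcard]
      exact Set.ncard_le_ncard hsub (Set.toFinite _)
    have := hD t
    omega
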